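/- Let m ≥ 1 be a natural number, let B₂ ≥ 0 and B₃ > 0 be reals, let U_k ∈ (0,1) and U_sum > 0 be reals. Suppose B₂ < B₃·U_k/(1 − U_k) and 0 < (U_sum − 1)·B₂ + (U_sum − m)·B₃, and additionally U_sum ≥ 1. Then U_sum > m − (m−1)·U_k. -/
import Mathlib

theorem stmt_3 (m : ℕ) (hm : 1 ≤ m) (B₂ B₃ Uk Usum : ℝ)
    (hB₂ : 0 ≤ B₂) (hB₃ : 0 < B₃) (hUk0 : 0 < Uk) (hUk1 : Uk < 1)
    (hUsum0 : 0 < Usum) (hUsum1 : 1 ≤ Usum)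
    (h1 : B₂ < B₃ * Uk / (1 - Uk))
    (h2 : 0 < (Usum - 1) * B₂ + (Usum - m) * B₃) :
    Usum > m - (m - 1) * Uk := by
  have hk : (0:ℝ) < 1 - Uk := by linarith
  have h1' : B₂ * (1 - Uk) < B₃ * Uk := by
    rw [lt_div_iff₀ hk] at h1; linarith
  nlinarith [mul_nonneg (sub_nonneg.2 hUsum1) hB₂, mul_pos hB₃ hk,
    mul_le_mul_of_nonneg_left (le_of_lt h1') (sub_nonneg.2 hUsum1)]
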